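/- Let F be a field and let C ⊆ F^n and D ⊆ F^m be linear codes. Then the minimum distance of the connected-sum code C # D (valued in ℕ∞) equals min( d(C'), d(D'), sInf { wt(c) + wt(d) : c ∈ C with c_n ≠ 0, d ∈ D with d_m ≠ 0 } ), where all infima are taken in ℕ∞ with sInf ∅ = ∞. -/
import Mathlib


/-- The connected-sum code `C # D` of two linear codes, consisting of pairs `(c, d)`
with `c ∈ C`, `d ∈ D`, whose last coordinates agree. -/
def connSum (F : Type*) [Field F] {n m : ℕ}
    (C : Submodule F (Fin (n + 1) → F)) (D : Submodule F (Fin (m + 1) → F)) :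
    Submodule F ((Fin (n + 1) → F) × (Fin (m + 1) → F)) where
  carrier := {x | x.1 ∈ C ∧ x.2 ∈ D ∧ x.1 (Fin.last n) = x.2 (Fin.last m)}
  add_mem' := by
    rintro a b ⟨ha₁, ha₂, ha₃⟩ ⟨hb₁, hb₂, hb₃⟩
    exact ⟨C.add_mem ha₁ hb₁, D.add_mem ha₂ hb₂, by simp [ha₃, hb₃]⟩
  zero_mem' := ⟨C.zero_mem, D.zero_mem, by simp⟩
  smul_mem' := by
    rintro r a ⟨h₁, h₂, h₃⟩
    exact ⟨C.smul_mem r h₁, D.smul_mem r h₂, by simp [h₃]⟩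

/-- The minimum distance (in `ℕ∞`, with `sInf ∅ = ∞`) of the
connected-sum code `C # D` equals
`min (d(C'), d(D'), sInf {wt c + wt d : c ∈ C, cₙ ≠ 0, d ∈ D, dₘ ≠ 0})`,
where `C' = {c ∈ C | cₙ = 0}` and `D' = {d ∈ D | dₘ = 0}`. -/
theorem stmt3 (F : Type*) [Field F] [DecidableEq F] (n m : ℕ)
    (C : Submodule F (Fin (n + 1) → F)) (D : Submodule F (Fin (m + 1) → F)) :
    sInf {w : ℕ∞ | ∃ x ∈ connSum F C D, x ≠ 0 ∧
        w = (hammingNorm x.1 : ℕ∞) + (hammingNorm x.2 : ℕ∞)} =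
      min (min
        (sInf {w : ℕ∞ | ∃ c ∈ C, c (Fin.last n) = 0 ∧ c ≠ 0 ∧ w = (hammingNorm c : ℕ∞)})
        (sInf {w : ℕ∞ | ∃ d ∈ D, d (Fin.last m) = 0 ∧ d ≠ 0 ∧ w = (hammingNorm d : ℕ∞)}))
        (sInf {w : ℕ∞ | ∃ c ∈ C, c (Fin.last n) ≠ 0 ∧ ∃ d ∈ D, d (Fin.last m) ≠ 0 ∧
          w = (hammingNorm c : ℕ∞) + (hammingNorm d : ℕ∞)}) := by
  apply le_antisymm
  · refine le_min (le_min ?_ ?_) ?_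
    · apply sInf_le_sInf
      rintro w ⟨c, hc, hc0, hcne, rfl⟩
      refine ⟨(c, 0), ⟨hc, D.zero_mem, by simp [hc0]⟩, by simp [hcne], ?_⟩
      simp
    · apply sInf_le_sInf
      rintro w ⟨d, hd, hd0, hdne, rfl⟩
      refine ⟨(0, d), ⟨C.zero_mem, hd, by simp [hd0]⟩, by simp [hdne], ?_⟩
      simp
    · apply sInf_le_sInf
      rintro w ⟨c, hc, hcn, d, hd, hdm, rfl⟩
      have hk : (c (Fin.last n) / d (Fin.last m)) ≠ 0 := div_ne_zero hcn hdm
      refine ⟨(c, (c (Fin.last n) / d (Fin.last m)) • d),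
        ⟨hc, D.smul_mem _ hd, ?_⟩, ?_, ?_⟩
      · simp [Pi.smul_apply, div_mul_cancel₀ _ hdm, smul_eq_mul]
      · intro h
        apply hcn
        have := congrArg Prod.fst h
        simp at this
        simp [this]
      · have : hammingNorm ((c (Fin.last n) / d (Fin.last m)) • d) = hammingNorm d :=
          hammingNorm_smul (fun i a b hab => mul_left_cancel₀ hk (by simpa [smul_eq_mul] using hab)) d
        simp [this]
  · apply le_sInf
    rintro w ⟨⟨c, d⟩, ⟨hc, hd, hlast⟩, hne, rfl⟩
    by_cases hcn : c (Fin.last n) = 0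
    · have hdm : d (Fin.last m) = 0 := by simpa [hcn] using hlast.symm
      by_cases hc0 : c = 0
      · have hd0 : d ≠ 0 := by
          intro h; exact hne (by simp [hc0, h, Prod.ext_iff])
        calc _ ≤ sInf {w : ℕ∞ | ∃ d ∈ D, d (Fin.last m) = 0 ∧ d ≠ 0 ∧
                  w = (hammingNorm d : ℕ∞)} := le_trans (min_le_left _ _) (min_le_right _ _)
          _ ≤ (hammingNorm d : ℕ∞) := sInf_le ⟨d, hd, hdm, hd0, rfl⟩
          _ ≤ _ := le_add_self
      · calc _ ≤ sInf {w : ℕ∞ | ∃ c ∈ C, c (Fin.last n) = 0 ∧ c ≠ 0 ∧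
                  w = (hammingNorm c : ℕ∞)} := le_trans (min_le_left _ _) (min_le_left _ _)
          _ ≤ (hammingNorm c : ℕ∞) := sInf_le ⟨c, hc, hcn, hc0, rfl⟩
          _ ≤ _ := le_self_add
    · have hdm : d (Fin.last m) ≠ 0 := fun h0 => hcn (by simpa [h0] using hlast)
      exact le_trans (min_le_right _ _) (sInf_le ⟨c, hc, hcn, d, hd, hdm, rfl⟩)
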